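/- The function y(x) = ln(1 + sin(π·x)) is an exact solution of Bratu's second boundary value problem: for every x with 1 + sin(π·x) > 0 (in particular for all x in [0,1], where 1 + sin(π·x) ≥ 1) one has y''(x) + π²·exp(-y(x)) = 0, and y(0) = 0 and y(1) = 0. -/

import Mathlib

open Real

private lemma inner_hasDeriv (t : ℝ) :
    HasDerivAt (fun s : ℝ => 1 + Real.sin (Real.pi * s)) (Real.pi * Real.cos (Real.pi * t)) t := by
  have h : HasDerivAt (fun s : ℝ => Real.pi * s) Real.pi t := by
    simpa using (hasDerivAt_id t).const_mul Real.pi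
  have := (Real.hasDerivAt_sin (Real.pi * t)).comp t h
  simpa [mul_comm] using (this.const_add 1)

private lemma f_hasDeriv {t : ℝ} (ht : 0 < 1 + Real.sin (Real.pi * t)) :
    HasDerivAt (fun s : ℝ => Real.log (1 + Real.sin (Real.pi * s)))
      (Real.pi * Real.cos (Real.pi * t) / (1 + Real.sin (Real.pi * t))) t :=
  (inner_hasDeriv t).log (ne_of_gt ht)

/-- The function `y x = ln (1 + sin (π x))` is an exact solution of Bratu's second
boundary value problem `y'' + π² * exp (-y) = 0`, `y 0 = y 1 = 0`, at every point
where `1 + sin (π x) > 0`. -/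
theorem bratu_second_bvp_exact_solution :
    (∀ x : ℝ, 0 < 1 + Real.sin (Real.pi * x) →
      deriv (deriv (fun t : ℝ => Real.log (1 + Real.sin (Real.pi * t)))) x
        + Real.pi ^ 2 * Real.exp (-(Real.log (1 + Real.sin (Real.pi * x)))) = 0) ∧
    Real.log (1 + Real.sin (Real.pi * (0 : ℝ))) = 0 ∧
    Real.log (1 + Real.sin (Real.pi * (1 : ℝ))) = 0 := by
  refine ⟨?_, by simp, by simp⟩
  intro x hx
  set g : ℝ → ℝ := fun s => Real.pi * Real.cos (Real.pi * s) / (1 + Real.sin (Real.pi * s))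
  -- the set where 1 + sin (π t) > 0 is open
  have hopen : IsOpen {t : ℝ | 0 < 1 + Real.sin (Real.pi * t)} :=
    isOpen_lt continuous_const (by continuity)
  have hmem : {t : ℝ | 0 < 1 + Real.sin (Real.pi * t)} ∈ nhds x :=
    hopen.mem_nhds hx
  have hEq : deriv (fun t : ℝ => Real.log (1 + Real.sin (Real.pi * t))) =ᶠ[nhds x] g := by
    filter_upwards [hmem] with t ht
    exact (f_hasDeriv ht).deriv
  have hderiv2 : deriv (deriv (fun t : ℝ => Real.log (1 + Real.sin (Real.pi * t)))) x
      = deriv g x := hEq.deriv_eq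
  -- compute deriv g x
  have hnum : HasDerivAt (fun s : ℝ => Real.pi * Real.cos (Real.pi * s))
      (Real.pi * (-Real.sin (Real.pi * x) * Real.pi)) x := by
    have h : HasDerivAt (fun s : ℝ => Real.pi * s) Real.pi x := by
      simpa using (hasDerivAt_id x).const_mul Real.pi
    exact ((Real.hasDerivAt_cos (Real.pi * x)).comp x h).const_mul Real.pi
  have hg : HasDerivAt g
      ((Real.pi * (-Real.sin (Real.pi * x) * Real.pi) * (1 + Real.sin (Real.pi * x))
        - Real.pi * Real.cos (Real.pi * x) * (Real.pi * Real.cos (Real.pi * x)))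
        / (1 + Real.sin (Real.pi * x)) ^ 2) x :=
    hnum.div (inner_hasDeriv x) (ne_of_gt hx)
  have hgd := hg.deriv
  rw [hderiv2, hgd, Real.exp_neg, Real.exp_log hx]
  have hsc : Real.sin (Real.pi * x) ^ 2 + Real.cos (Real.pi * x) ^ 2 = 1 :=
    Real.sin_sq_add_cos_sq _
  have h1 : (1 + Real.sin (Real.pi * x)) ≠ 0 := ne_of_gt hx
  field_simp
  linear_combination (- Real.pi ^ 2) * hsc
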